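/- Let n ≥ 4 be even, κ ≥ log 2, j ≥ 1, 1 ≤ δ, and T ≥ j + δ. Then (n/2)·exp(−κj) + exp(−κ(j+δ−1)) + (n/2 − 1)·exp(−κT) ≥ exp(−κj) + exp(−κ(j+δ)) + (n−2)·exp(−κ(j+1)). -/
import Mathlib


/-- Core inequality (even case) of `R_SPST ≥ R_FCFS`: for even `n ≥ 4`,
`κ ≥ log 2`, `j ≥ 1`, `δ ≥ 1`, `T ≥ j + δ`. -/
theorem core_inequality_even
    (n : ℕ) (κ j δ T : ℝ)
    (hn : 4 ≤ n) (heven : Even n)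
    (hκ : Real.log 2 ≤ κ) (hj : 1 ≤ j) (hδ : 1 ≤ δ) (hT : j + δ ≤ T) :
    Real.exp (-κ * j) + Real.exp (-κ * (j + δ)) +
        ((n : ℝ) - 2) * Real.exp (-κ * (j + 1)) ≤
      ((n : ℝ) / 2) * Real.exp (-κ * j) + Real.exp (-κ * (j + δ - 1)) +
        ((n : ℝ) / 2 - 1) * Real.exp (-κ * T) := by
  obtain ⟨m, hm⟩ := heven
  have hm2 : 2 ≤ m := by omega
  have hnR : (n : ℝ) = 2 * (m : ℝ) := by rw [hm]; push_cast; ring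
  have hmR : (2 : ℝ) ≤ (m : ℝ) := by exact_mod_cast hm2
  have h2 : (2 : ℝ) ≤ Real.exp κ := by
    calc (2 : ℝ) = Real.exp (Real.log 2) := (Real.exp_log (by norm_num)).symm
    _ ≤ Real.exp κ := Real.exp_le_exp.mpr hκ
  have e1 : Real.exp (-κ * (j + 1)) = Real.exp (-κ * j) * Real.exp (-κ) := by
    rw [← Real.exp_add]; ring_nf
  have e2 : Real.exp (-κ * (j + δ - 1)) = Real.exp (-κ * (j + δ)) * Real.exp κ := by
    rw [← Real.exp_add]; ring_nf
  have hmul : Real.exp (-κ) * Real.exp κ = 1 := by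
    rw [← Real.exp_add]; simp
  have ha : Real.exp (-κ) ≤ 1 / 2 := by
    have hp := Real.exp_pos κ
    rw [Real.exp_neg]
    rw [inv_le_comm₀ (by positivity) (by norm_num)]
    simpa using h2
  have hT0 : (0 : ℝ) ≤ Real.exp (-κ * T) := (Real.exp_pos _).le
  have hj0 : (0 : ℝ) < Real.exp (-κ * j) := Real.exp_pos _
  have hjd0 : (0 : ℝ) < Real.exp (-κ * (j + δ)) := Real.exp_pos _
  rw [hnR, e1, e2]
  nlinarith [mul_nonneg (mul_nonneg (by linarith : (0:ℝ) ≤ (m:ℝ) - 1) hj0.le)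
      (by linarith : (0:ℝ) ≤ 1 - 2 * Real.exp (-κ)),
    mul_nonneg hjd0.le (by linarith : (0:ℝ) ≤ Real.exp κ - 2),
    mul_nonneg (by linarith : (0:ℝ) ≤ (m:ℝ) - 1) hT0]
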